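/- arXiv:1312.6546 — 8 statements merged into one kernel-verified Lean document; each statement's English description precedes it below -/
import Mathlib

section
/- For discrete assignments of indivisible objects, agent i's allocation p(i) stochastically dominates allocation q(i) (i.e., for every object o, the number of objects in p(i) weakly preferred to o is at least the number in q(i) weakly preferred to o) if and only if there exists an injection f from q(i) to p(i) such that f(o) is weakly preferred to o for every o in q(i). -/
/-!
Sufficiency of the injection is immediate: it maps the objects of `T` weakly preferred to `o`
injectively into the objects of `S` weakly preferred to `o`. For necessity we use Hall's
marriage theorem, matching each `o ∈ T` to an object of `S` weakly preferred to it. Hall's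
condition holds because any nonempty `A ⊆ T` has a worst element `m`: all of `A` is weakly
preferred to `m`, so `#A ≤ #{o' ∈ T | o' ≿ m} ≤ #{o' ∈ S | o' ≿ m}`, and every such object
of `S` is a candidate partner of `m`.
-/

open Finset

section TotalPreorder

variable {α : Type*} {r : α → α → Prop}

theorem Finset.exists_forall_rel_of_total (htot : ∀ a b, r a b ∨ r b a)
    (htrans : ∀ a b c, r a b → r b c → r a c) {A : Finset α} (hA : A.Nonempty) :
    ∃ m ∈ A, ∀ a ∈ A, r a m := by
  have hrefl : ∀ a, r a a := fun a => (htot a a).elim id id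
  induction hA using Finset.Nonempty.cons_induction with
  | singleton a =>
    exact ⟨a, mem_singleton_self a, fun b hb => mem_singleton.mp hb ▸ hrefl a⟩
  | cons a s _ _ ih =>
    obtain ⟨m, hms, hm⟩ := ih
    rcases htot a m with ham | hma
    · refine ⟨m, mem_cons_of_mem hms, fun b hb => ?_⟩
      rcases mem_cons.mp hb with rfl | hbs
      exacts [ham, hm b hbs]
    · refine ⟨a, mem_cons_self a s, fun b hb => ?_⟩
      rcases mem_cons.mp hb with rfl | hbs
      exacts [hrefl b, htrans _ _ _ (hm b hbs) hma]

variable [DecidableRel r]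

theorem card_filter_rel_le_of_injOn (htrans : ∀ a b c, r a b → r b c → r a c)
    {S T : Finset α} {f : α → α} (hinj : Set.InjOn f T) (hf : ∀ o ∈ T, f o ∈ S ∧ r (f o) o)
    (o : α) : #(T.filter (r · o)) ≤ #(S.filter (r · o)) := by
  refine card_le_card_of_injOn f (fun x hx => ?_) (hinj.mono fun x hx => (mem_filter.mp hx).1)
  obtain ⟨hxT, hxo⟩ := mem_filter.mp hx
  obtain ⟨hfS, hfx⟩ := hf x hxT
  exact mem_filter.mpr ⟨hfS, htrans _ _ _ hfx hxo⟩

theorem card_le_card_biUnion_filter_rel [DecidableEq α] (htot : ∀ a b, r a b ∨ r b a)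
    (htrans : ∀ a b c, r a b → r b c → r a c) {S T : Finset α}
    (hSD : ∀ o, #(T.filter (r · o)) ≤ #(S.filter (r · o))) (A : Finset T) :
    #A ≤ #(A.biUnion fun o => S.filter (r · o.1)) := by
  rcases A.eq_empty_or_nonempty with rfl | hA
  · simp
  obtain ⟨m, hmA, hm⟩ := exists_forall_rel_of_total (α := T) (r := fun a b => r a.1 b.1)
    (fun a b => htot a b) (fun a b c => htrans a b c) hA
  calc #A = #(A.map (Function.Embedding.subtype _)) := (card_map _).symm
    _ ≤ #(T.filter (r · m.1)) := card_le_card fun x hx => by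
        obtain ⟨a, haA, rfl⟩ := mem_map.mp hx
        exact mem_filter.mpr ⟨a.2, hm a haA⟩
    _ ≤ #(S.filter (r · m.1)) := hSD m
    _ ≤ #(A.biUnion fun o => S.filter (r · o.1)) := card_le_card (subset_biUnion_of_mem (fun o : T => S.filter (r · o.1)) hmA)

theorem exists_injOn_of_card_filter_rel_le [DecidableEq α] (htot : ∀ a b, r a b ∨ r b a)
    (htrans : ∀ a b c, r a b → r b c → r a c) {S T : Finset α}
    (hSD : ∀ o, #(T.filter (r · o)) ≤ #(S.filter (r · o))) :
    ∃ f : α → α, Set.InjOn f T ∧ ∀ o ∈ T, f o ∈ S ∧ r (f o) o := by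
  obtain ⟨g, hginj, hg⟩ := (all_card_le_biUnion_card_iff_exists_injective
    fun o : T => S.filter (r · o.1)).mp (card_le_card_biUnion_filter_rel htot htrans hSD)
  refine ⟨fun o => if h : o ∈ T then g ⟨o, h⟩ else o, fun a ha b hb hab => ?_, fun o ho => ?_⟩
  · simp only [mem_coe] at ha hb
    simp only [dif_pos ha, dif_pos hb] at hab
    exact congrArg Subtype.val (hginj hab)
  · simpa only [dif_pos ho, mem_filter] using hg ⟨o, ho⟩

end TotalPreorder

theorem stmt_0_general {O : Type}
    (r : O → O → Prop) [DecidableRel r]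
    (htot : ∀ a b : O, r a b ∨ r b a)
    (htrans : ∀ a b c : O, r a b → r b c → r a c)
    (S T : Finset O) :
    (∀ o : O, (T.filter (fun o' => r o' o)).card ≤ (S.filter (fun o' => r o' o)).card)
      ↔ ∃ f : O → O, Set.InjOn f ↑T ∧ ∀ o ∈ T, f o ∈ S ∧ r (f o) o := by
  classical
  exact ⟨exists_injOn_of_card_filter_rel_le htot htrans,
    fun ⟨_, hinj, hf⟩ => card_filter_rel_le_of_injOn htrans hinj hf⟩

/-- SD dominance of discrete allocations is equivalent to the
existence of an injection from q(i) to p(i) mapping each object to a weakly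
preferred one (responsive set extension). -/
theorem stmt_0 {O : Type} [Fintype O] [DecidableEq O]
    (r : O → O → Prop) [DecidableRel r]
    (htot : ∀ a b : O, r a b ∨ r b a)
    (htrans : ∀ a b c : O, r a b → r b c → r a c)
    (S T : Finset O) :
    (∀ o : O, (T.filter (fun o' => r o' o)).card ≤ (S.filter (fun o' => r o' o)).card)
      ↔ ∃ f : O → O, Set.InjOn f ↑T ∧ ∀ o ∈ T, f o ∈ S ∧ r (f o) o :=
  stmt_0_general r htot htrans S T
end

section
/- Possible envy-freeness implies weak SD proportionality: if for each agent i there exists an additive utility u_i consistent with agent i's preferences such that u_i(p(i)) ≥ u_i(p(j)) for all j, then for each agent i there exists a consistent utility u_i with u_i(p(i)) ≥ u_i(O)/n. -/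
/-- possible envy-freeness implies weak SD (possible)
proportionality. -/
theorem stmt_5 {O : Type} [Fintype O] [DecidableEq O] {n : ℕ} (hn : 0 < n)
    (r : Fin n → O → O → Prop)
    (p : Fin n → Finset O) (hpart : ∀ o : O, ∃! i, o ∈ p i)
    (hef : ∀ i, ∃ u : O → ℝ, (∀ a b : O, u a ≥ u b ↔ r i a b) ∧
        ∀ j, ∑ o ∈ p j, u o ≤ ∑ o ∈ p i, u o) :
    ∀ i, ∃ u : O → ℝ, (∀ a b : O, u a ≥ u b ↔ r i a b) ∧
        (∑ o : O, u o) / n ≤ ∑ o ∈ p i, u o := by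
  intro i
  obtain ⟨u, hu, hj⟩ := hef i
  refine ⟨u, hu, ?_⟩
  choose f hf huniq using hpart
  have hmem : ∀ (o : O) (j : Fin n), o ∈ p j ↔ f o = j := by
    intro o j
    constructor
    · intro h; exact (huniq o j h).symm
    · rintro rfl; exact hf o
  have hsum : ∑ o : O, u o = ∑ j : Fin n, ∑ o ∈ p j, u o := by
    rw [← Finset.sum_fiberwise Finset.univ f u]
    refine Finset.sum_congr rfl fun j _ => ?_
    refine Finset.sum_congr ?_ fun _ _ => rfl
    ext o
    simp [hmem o j, eq_comm]
  have hle : ∑ o : O, u o ≤ n * ∑ o ∈ p i, u o := by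
    rw [hsum]
    calc ∑ j : Fin n, ∑ o ∈ p j, u o ≤ ∑ _j : Fin n, ∑ o ∈ p i, u o :=
          Finset.sum_le_sum fun j _ => hj j
      _ = n * ∑ o ∈ p i, u o := by simp [Finset.sum_const, nsmul_eq_mul]
  rw [div_le_iff₀ (by exact_mod_cast hn : (0:ℝ) < n)]
  linarith [hle]
end

section
/- If p is a discrete SD proportional assignment of m objects to n agents, then n divides m and each agent receives exactly m/n objects. -/
lemma exists_bot_aux {O : Type} [DecidableEq O] (r : O → O → Prop)
    (htot : ∀ a b : O, r a b ∨ r b a)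
    (htrans : ∀ a b c : O, r a b → r b c → r a c)
    (s : Finset O) (hs : s.Nonempty) : ∃ o ∈ s, ∀ o' ∈ s, r o' o := by
  induction s using Finset.induction_on with
  | empty => exact absurd hs (by simp)
  | @insert a s' ha ih =>
    rcases s'.eq_empty_or_nonempty with h | h
    · subst h
      exact ⟨a, by simp, by simpa using (htot a a).elim id id⟩
    · obtain ⟨o, ho, hmin⟩ := ih h
      rcases htot a o with hao | hoa
      · refine ⟨o, Finset.mem_insert_of_mem ho, ?_⟩
        intro o' ho'
        rcases Finset.mem_insert.mp ho' with rfl | ho'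
        · exact hao
        · exact hmin o' ho'
      · refine ⟨a, Finset.mem_insert_self a s', ?_⟩
        intro o' ho'
        rcases Finset.mem_insert.mp ho' with rfl | ho'
        · exact (htot o' o').elim id id
        · exact htrans o' o a (hmin o' ho') hoa

/-- if p is a discrete SD proportional assignment, then n divides
m and each agent receives exactly m/n objects. -/
theorem stmt_6 {O : Type} [Fintype O] [DecidableEq O] {n : ℕ} (hn : 0 < n)
    (r : Fin n → O → O → Prop) [∀ i, DecidableRel (r i)]
    (htot : ∀ i (a b : O), r i a b ∨ r i b a)
    (htrans : ∀ i (a b c : O), r i a b → r i b c → r i a c)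
    (p : Fin n → Finset O) (hpart : ∀ o : O, ∃! i, o ∈ p i)
    (hprop : ∀ i (o : O),
      (Finset.univ.filter (fun o' => r i o' o)).card
        ≤ ((p i).filter (fun o' => r i o' o)).card * n) :
    n ∣ Fintype.card O ∧ ∀ i, (p i).card = Fintype.card O / n := by
  set m := Fintype.card O with hm
  -- the assignment function
  have hsum : ∑ i, (p i).card = m := by
    classical
    have : (Finset.univ : Finset O).card =
        ∑ i, (Finset.univ.filter (fun o => (hpart o).choose = i)).card := by
      exact Finset.card_eq_sum_card_fiberwise (fun o _ => Finset.mem_univ _)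
    have hp : ∀ i, p i = Finset.univ.filter (fun o => (hpart o).choose = i) := by
      intro i
      ext o
      simp only [Finset.mem_filter, Finset.mem_univ, true_and]
      constructor
      · intro ho
        exact ((hpart o).choose_spec.2 i ho).symm
      · rintro rfl
        exact (hpart o).choose_spec.1
    rw [hm, ← Finset.card_univ, this]
    exact Finset.sum_congr rfl (fun i _ => by rw [hp i])
  -- each agent gets at least m/n
  have hge : ∀ i, m ≤ (p i).card * n := by
    intro i
    rcases Nat.eq_zero_or_pos m with h0 | h0
    · simp [h0]
    · have hne : (Finset.univ : Finset O).Nonempty := by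
        rw [← Finset.card_pos, Finset.card_univ]; exact h0
      obtain ⟨o, -, hmin⟩ := exists_bot_aux (r i) (htot i) (htrans i)
        Finset.univ hne
      have h1 : (Finset.univ.filter (fun o' => r i o' o)) = Finset.univ := by
        apply Finset.filter_true_of_mem
        intro o' _; exact hmin o' (Finset.mem_univ _)
      have h2 := hprop i o
      rw [h1, Finset.card_univ] at h2
      calc m ≤ ((p i).filter (fun o' => r i o' o)).card * n := h2
        _ ≤ (p i).card * n :=
          Nat.mul_le_mul_right n (Finset.card_filter_le _ _)
  -- sums are equal, so each inequality is equality
  have hsum2 : ∑ i : Fin n, (p i).card * n = ∑ i : Fin n, m := by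
    rw [← Finset.sum_mul, hsum, Finset.sum_const, Finset.card_univ,
      Fintype.card_fin, smul_eq_mul, Nat.mul_comm]
  have heq : ∀ i : Fin n, (p i).card * n = m := by
    intro i
    have := (Finset.sum_eq_sum_iff_of_le (fun i _ => hge i)).mp hsum2.symm
    exact (this i (Finset.mem_univ i)).symm
  rcases Nat.eq_zero_or_pos n with h | h
  · omega
  constructor
  · exact ⟨(p ⟨0, h⟩).card, (heq ⟨0, h⟩).symm.trans (Nat.mul_comm _ _)⟩
  · intro i
    have h1 := heq i
    have : (p i).card = m / n := by
      rw [← h1, Nat.mul_div_cancel _ h]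
    exact this
end

section
/- For agents with identical weak-order preferences over objects, an SD envy-free discrete assignment exists if and only if the size of each indifference (equivalence) class of the common preference is a multiple of the number of agents n. -/
/-- Count of a residue class inside `range (n*q)` is exactly `q`. -/
lemma count_mod_range (n q i : ℕ) (hi : i < n) :
    ((Finset.range (n * q)).filter (fun t => t % n = i)).card = q := by
  have hn : 0 < n := lt_of_le_of_lt (Nat.zero_le _) hi
  have himg : (Finset.range (n * q)).filter (fun t => t % n = i)
      = (Finset.range q).image (fun j => j * n + i) := by
    ext t
    simp only [Finset.mem_filter, Finset.mem_range, Finset.mem_image]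
    constructor
    · rintro ⟨ht, hmod⟩
      refine ⟨t / n, ?_, ?_⟩
      · exact (Nat.div_lt_iff_lt_mul hn).mpr (by rwa [mul_comm] at ht)
      · have h1 := Nat.div_add_mod t n
        have h2 : n * (t / n) = t / n * n := Nat.mul_comm _ _
        omega
    · rintro ⟨j, hj, rfl⟩
      constructor
      · calc j * n + i < j * n + n := by omega
          _ = (j + 1) * n := by ring
          _ ≤ q * n := Nat.mul_le_mul_right n hj
          _ = n * q := mul_comm _ _
      · rw [Nat.add_comm, Nat.add_mul_mod_self_right, Nat.mod_eq_of_lt hi]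
  rw [himg, Finset.card_image_of_injective _ (fun a b hab => by
    have : a * n = b * n := by omega
    exact Nat.eq_of_mul_eq_mul_right hn this), Finset.card_range]

/-- for identical weak-order preferences, an SD envy-free discrete
assignment exists iff each indifference class has size a multiple of n. -/
theorem stmt_7 {O : Type} [Fintype O] [DecidableEq O] {n : ℕ} (hn : 0 < n)
    (r : O → O → Prop) [DecidableRel r]
    (htot : ∀ a b : O, r a b ∨ r b a)
    (htrans : ∀ a b c : O, r a b → r b c → r a c) :
    (∃ p : Fin n → Finset O, (∀ o : O, ∃! i, o ∈ p i) ∧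
        ∀ i j : Fin n, ∀ o : O,
          ((p j).filter (fun o' => r o' o)).card ≤ ((p i).filter (fun o' => r o' o)).card)
      ↔ ∀ o : O, n ∣ (Finset.univ.filter (fun o' => r o' o ∧ r o o')).card := by
  classical
  have hrefl : ∀ a : O, r a a := fun a => (htot a a).elim id id
  -- the "key" of an object: number of objects weakly preferred to it
  set key : O → ℕ := fun o => (Finset.univ.filter (fun o' => r o' o)).card with hkeydef
  have hsub : ∀ a b : O, r a b →
      (Finset.univ.filter (fun o' => r o' a)) ⊆ (Finset.univ.filter (fun o' => r o' b)) := by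
    intro a b hab x hx
    simp only [Finset.mem_filter, Finset.mem_univ, true_and] at hx ⊢
    exact htrans x a b hx hab
  have hmono : ∀ a b : O, r a b → key a ≤ key b :=
    fun a b hab => Finset.card_le_card (hsub a b hab)
  have hstrict : ∀ a b : O, ¬ r a b → key b < key a := by
    intro a b hab
    have hba : r b a := (htot a b).resolve_left hab
    refine Finset.card_lt_card ?_
    rw [Finset.ssubset_iff_of_subset (hsub b a hba)]
    exact ⟨a, by simp [hrefl a], by simp [hab]⟩
  have hkey : ∀ a b : O, r a b ↔ key a ≤ key b := by
    intro a b
    constructor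
    · exact hmono a b
    · intro h
      by_contra hab
      exact absurd h (not_le.mpr (hstrict a b hab))
  constructor
  · -- forward: envy-free assignment exists → each class size divisible by n
    rintro ⟨p, hpart, henv⟩ o
    -- counts are equal across agents
    have hceq : ∀ i j : Fin n, ((p i).filter (fun o' => r o' o)).card
        = ((p j).filter (fun o' => r o' o)).card :=
      fun i j => le_antisymm (henv j i o) (henv i j o)
    have i0 : Fin n := ⟨0, hn⟩
    -- total count
    have hbiu : Finset.univ.filter (fun o' => r o' o)
        = Finset.univ.biUnion (fun i : Fin n => (p i).filter (fun o' => r o' o)) := by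
      ext x
      simp only [Finset.mem_filter, Finset.mem_univ, true_and, Finset.mem_biUnion]
      constructor
      · intro hx
        obtain ⟨i, hi, -⟩ := hpart x
        exact ⟨i, hi, hx⟩
      · rintro ⟨i, hi, hx⟩
        exact hx
    have hdisj : ∀ i ∈ (Finset.univ : Finset (Fin n)), ∀ j ∈ (Finset.univ : Finset (Fin n)),
        i ≠ j → Disjoint ((p i).filter (fun o' => r o' o)) ((p j).filter (fun o' => r o' o)) := by
      intro i _ j _ hij
      rw [Finset.disjoint_left]
      intro x hxi hxj
      obtain ⟨k, -, huniq⟩ := hpart x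
      have h1 : i = k := huniq i (Finset.mem_filter.mp hxi).1
      have h2 : j = k := huniq j (Finset.mem_filter.mp hxj).1
      exact hij (h1.trans h2.symm)
    have htotal : (Finset.univ.filter (fun o' => r o' o)).card
        = ∑ i : Fin n, ((p i).filter (fun o' => r o' o)).card := by
      rw [hbiu, Finset.card_biUnion hdisj]
    have hsum : (Finset.univ.filter (fun o' => r o' o)).card
        = n * ((p i0).filter (fun o' => r o' o)).card := by
      rw [htotal]
      rw [Finset.sum_congr rfl (fun i _ => hceq i i0), Finset.sum_const, Finset.card_univ,
        Fintype.card_fin, smul_eq_mul]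
    have hdvdtot : n ∣ (Finset.univ.filter (fun o' => r o' o)).card := ⟨_, hsum⟩
    -- the strict upper set is divisible by n too
    set S : Finset O := Finset.univ.filter (fun o' => ¬ r o o') with hSdef
    have hdvdS : n ∣ S.card := by
      rcases S.eq_empty_or_nonempty with hS | hS
      · simp [hS]
      · obtain ⟨b, hbS, hbmax⟩ := Finset.exists_max_image S key hS
        have hbS' : ¬ r o b := (Finset.mem_filter.mp hbS).2
        have hSeq : S = Finset.univ.filter (fun o' => r o' b) := by
          ext x
          simp only [hSdef, Finset.mem_filter, Finset.mem_univ, true_and]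
          constructor
          · intro hx
            exact (hkey x b).mpr (hbmax x (by simp [hSdef, hx]))
          · intro hx hox
            exact hbS' (htrans o x b hox hx)
        have hdvdb : n ∣ (Finset.univ.filter (fun o' => r o' b)).card := by
          have hceqb : ∀ i j : Fin n, ((p i).filter (fun o' => r o' b)).card
              = ((p j).filter (fun o' => r o' b)).card :=
            fun i j => le_antisymm (henv j i b) (henv i j b)
          have hbiu' : Finset.univ.filter (fun o' => r o' b)
              = Finset.univ.biUnion (fun i : Fin n => (p i).filter (fun o' => r o' b)) := by
            ext x
            simp only [Finset.mem_filter, Finset.mem_univ, true_and, Finset.mem_biUnion]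
            constructor
            · intro hx
              obtain ⟨i, hi, -⟩ := hpart x
              exact ⟨i, hi, hx⟩
            · rintro ⟨i, hi, hx⟩
              exact hx
          have hdisj' : ∀ i ∈ (Finset.univ : Finset (Fin n)), ∀ j ∈ (Finset.univ : Finset (Fin n)),
              i ≠ j → Disjoint ((p i).filter (fun o' => r o' b)) ((p j).filter (fun o' => r o' b)) := by
            intro i _ j _ hij
            rw [Finset.disjoint_left]
            intro x hxi hxj
            obtain ⟨k, -, huniq⟩ := hpart x
            exact hij ((huniq i (Finset.mem_filter.mp hxi).1).trans
              (huniq j (Finset.mem_filter.mp hxj).1).symm)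
          refine ⟨((p i0).filter (fun o' => r o' b)).card, ?_⟩
          rw [hbiu', Finset.card_biUnion hdisj',
            Finset.sum_congr rfl (fun i _ => hceqb i i0), Finset.sum_const, Finset.card_univ,
            Fintype.card_fin, smul_eq_mul]
        rwa [hSeq]
    -- split: weakly-preferred set = class ∪ strict upper set
    have hsplit : (Finset.univ.filter (fun o' => r o' o)).card
        = (Finset.univ.filter (fun o' => r o' o ∧ r o o')).card + S.card := by
      rw [← Finset.card_union_of_disjoint]
      · congr 1
        ext x
        simp only [hSdef, Finset.mem_union, Finset.mem_filter, Finset.mem_univ, true_and]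
        constructor
        · intro hx
          by_cases hox : r o x
          · exact Or.inl ⟨hx, hox⟩
          · exact Or.inr hox
        · rintro (⟨hx, -⟩ | hx)
          · exact hx
          · exact (htot x o).resolve_right hx
      · rw [Finset.disjoint_left]
        intro x hx hx'
        exact (Finset.mem_filter.mp hx').2 (Finset.mem_filter.mp hx).2.2
    obtain ⟨a, ha⟩ := hdvdtot
    obtain ⟨c, hc⟩ := hdvdS
    refine ⟨a - c, ?_⟩
    have hca : c ≤ a := Nat.le_of_mul_le_mul_left (by omega) hn
    have h4 : n * a = n * c + n * (a - c) := by
      rw [← Nat.mul_add]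
      congr 1
      omega
    omega
  · -- backward: divisibility → construct a round-robin envy-free assignment
    intro hdvd
    set m := Fintype.card O with hm
    set g : O → ℕ := fun o => ((Fintype.equivFin O) o : ℕ) with hgdef
    have hginj : Function.Injective g := by
      intro a b hab
      exact (Fintype.equivFin O).injective (Fin.ext hab)
    -- the rank of each object in a linearization
    set rank : O → ℕ := fun o =>
      (Finset.univ.filter (fun x => key x < key o)).card +
      (Finset.univ.filter (fun x => key x = key o ∧ g x < g o)).card with hrankdef
    -- rank o < card (filter (key ≤ key o))
    have hrank_lt : ∀ o : O, rank o < (Finset.univ.filter (fun x => key x ≤ key o)).card := by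
      intro o
      have hunion : (Finset.univ.filter (fun x => key x < key o)) ∪
          (Finset.univ.filter (fun x => key x = key o ∧ g x < g o)) ∪ {o}
          ⊆ Finset.univ.filter (fun x => key x ≤ key o) := by
        intro x hx
        simp only [Finset.mem_union, Finset.mem_filter, Finset.mem_univ, true_and,
          Finset.mem_singleton] at hx
        rcases hx with ((h | h) | rfl) <;>
          simp only [Finset.mem_filter, Finset.mem_univ, true_and] <;> omega
      have hd1 : Disjoint (Finset.univ.filter (fun x => key x < key o))
          (Finset.univ.filter (fun x => key x = key o ∧ g x < g o)) := by
        rw [Finset.disjoint_left]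
        intro x hx hx'
        simp only [Finset.mem_filter, Finset.mem_univ, true_and] at hx hx'
        omega
      have hd2 : Disjoint ((Finset.univ.filter (fun x => key x < key o)) ∪
          (Finset.univ.filter (fun x => key x = key o ∧ g x < g o))) ({o} : Finset O) := by
        rw [Finset.disjoint_right]
        intro x hx
        rw [Finset.mem_singleton] at hx
        subst hx
        simp only [Finset.mem_union, Finset.mem_filter, Finset.mem_univ, true_and]
        push_neg
        omega
      have := Finset.card_le_card hunion
      rw [Finset.card_union_of_disjoint hd2, Finset.card_union_of_disjoint hd1,
        Finset.card_singleton] at this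
      have hro : rank o = (Finset.univ.filter (fun x => key x < key o)).card +
          (Finset.univ.filter (fun x => key x = key o ∧ g x < g o)).card := rfl
      omega
    -- the weakly-preferred set of o as a key-filter
    have hfilter_eq : ∀ o : O, Finset.univ.filter (fun o' => r o' o)
        = Finset.univ.filter (fun x => key x ≤ key o) := by
      intro o
      ext x
      simp only [Finset.mem_filter, Finset.mem_univ, true_and]
      exact hkey x o
    -- prefix property
    have hprefix : ∀ o o' : O, r o' o ↔ rank o' < (Finset.univ.filter (fun o'' => r o'' o)).card := by
      intro o o'
      rw [hfilter_eq o]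
      constructor
      · intro h
        have hko : key o' ≤ key o := (hkey o' o).mp h
        calc rank o' < (Finset.univ.filter (fun x => key x ≤ key o')).card := hrank_lt o'
          _ ≤ (Finset.univ.filter (fun x => key x ≤ key o)).card := by
              apply Finset.card_le_card
              intro x hx
              simp only [Finset.mem_filter, Finset.mem_univ, true_and] at hx ⊢
              omega
      · intro h
        by_contra hro
        have hko : key o < key o' := hstrict o' o hro
        have hle : (Finset.univ.filter (fun x => key x ≤ key o)).card
            ≤ (Finset.univ.filter (fun x => key x < key o')).card := by
          apply Finset.card_le_card
          intro x hx
          simp only [Finset.mem_filter, Finset.mem_univ, true_and] at hx ⊢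
          omega
        have : (Finset.univ.filter (fun x => key x < key o')).card ≤ rank o' := Nat.le_add_right _ _
        omega
    -- rank is injective
    have hrankinj : Function.Injective rank := by
      intro a b hab
      by_contra hne
      -- wlog via cases
      have main : ∀ a b : O, a ≠ b → key a < key b ∨ (key a = key b ∧ g a < g b) →
          rank a < rank b := by
        intro a b hne hcase
        rcases hcase with hk | ⟨hk, hg⟩
        · calc rank a < (Finset.univ.filter (fun x => key x ≤ key a)).card := hrank_lt a
            _ ≤ (Finset.univ.filter (fun x => key x < key b)).card := by
                apply Finset.card_le_card
                intro x hx
                simp only [Finset.mem_filter, Finset.mem_univ, true_and] at hx ⊢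
                omega
            _ ≤ rank b := Nat.le_add_right _ _
        · have hsub2 : (Finset.univ.filter (fun x => key x = key a ∧ g x < g a)) ∪ {a}
              ⊆ Finset.univ.filter (fun x => key x = key b ∧ g x < g b) := by
            intro x hx
            simp only [Finset.mem_union, Finset.mem_filter, Finset.mem_univ, true_and,
              Finset.mem_singleton] at hx
            rcases hx with h | rfl <;>
              simp only [Finset.mem_filter, Finset.mem_univ, true_and] <;> omega
          have hd : Disjoint (Finset.univ.filter (fun x => key x = key a ∧ g x < g a))
              ({a} : Finset O) := by
            rw [Finset.disjoint_right]
            intro x hx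
            rw [Finset.mem_singleton] at hx
            subst hx
            simp only [Finset.mem_filter, Finset.mem_univ, true_and]
            push_neg
            omega
          have h2 := Finset.card_le_card hsub2
          rw [Finset.card_union_of_disjoint hd, Finset.card_singleton] at h2
          have heq : (Finset.univ.filter (fun x => key x < key a))
              = (Finset.univ.filter (fun x => key x < key b)) := by
            ext x
            simp only [Finset.mem_filter, Finset.mem_univ, true_and]
            omega
          simp only [hrankdef]
          rw [heq]
          omega
      rcases lt_trichotomy (key a) (key b) with hk | hk | hk
      · exact absurd hab (Nat.ne_of_lt (main a b hne (Or.inl hk)))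
      · rcases lt_trichotomy (g a) (g b) with hg | hg | hg
        · exact absurd hab (Nat.ne_of_lt (main a b hne (Or.inr ⟨hk, hg⟩)))
        · exact hne (hginj hg)
        · exact absurd hab.symm (Nat.ne_of_lt (main b a (Ne.symm hne) (Or.inr ⟨hk.symm, hg⟩)))
      · exact absurd hab.symm (Nat.ne_of_lt (main b a (Ne.symm hne) (Or.inl hk)))
    -- rank maps univ bijectively onto range m
    have hrank_bound : ∀ o : O, rank o < m := by
      intro o
      calc rank o < (Finset.univ.filter (fun x => key x ≤ key o)).card := hrank_lt o
        _ ≤ Finset.univ.card := Finset.card_le_card (Finset.filter_subset _ _)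
        _ = m := by rw [Finset.card_univ]
    have himage : Finset.univ.image rank = Finset.range m := by
      apply Finset.eq_of_subset_of_card_le
      · intro t ht
        obtain ⟨o, -, rfl⟩ := Finset.mem_image.mp ht
        exact Finset.mem_range.mpr (hrank_bound o)
      · rw [Finset.card_range, Finset.card_image_of_injective _ hrankinj, Finset.card_univ]
    -- the assignment
    refine ⟨fun i => Finset.univ.filter (fun o => rank o % n = (i : ℕ)), ?_, ?_⟩
    · intro o
      refine ⟨⟨rank o % n, Nat.mod_lt _ hn⟩, by simp, ?_⟩
      intro i hi
      simp only [Finset.mem_filter, Finset.mem_univ, true_and] at hi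
      exact Fin.ext hi.symm
    · intro i j o
      -- both counts equal K / n where K = card of weakly-preferred set
      set K := (Finset.univ.filter (fun o' => r o' o)).card with hK
      have hdvdK : n ∣ K := by
        -- K = class card + strict-upper card, strict-upper = union of classes... 
        -- direct: induction on key values. Instead: K = card {key ≤ key o};
        -- show n ∣ card {key ≤ c} for any c by strong induction.
        have general : ∀ c : ℕ, n ∣ (Finset.univ.filter (fun x => key x ≤ c)).card := by
          intro c
          induction c using Nat.strong_induction_on with
          | _ c ih =>
            rcases (Finset.univ.filter (fun x => key x ≤ c)).eq_empty_or_nonempty with he | hne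
            · simp [he]
            · obtain ⟨b, hbmem, hbmax⟩ := Finset.exists_max_image _ key hne
              simp only [Finset.mem_filter, Finset.mem_univ, true_and] at hbmem
              -- split into {key ≤ key b} = {key < key b} ∪ class of b
              have hsplit2 : Finset.univ.filter (fun x => key x ≤ c)
                  = Finset.univ.filter (fun x => key x ≤ key b) := by
                ext x
                simp only [Finset.mem_filter, Finset.mem_univ, true_and]
                constructor
                · intro hx
                  exact hbmax x (by simp [hx])
                · intro hx
                  omega
              have hclass : Finset.univ.filter (fun o' => r o' b ∧ r b o')
                  = Finset.univ.filter (fun x => key x = key b) := by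
                ext x
                simp only [Finset.mem_filter, Finset.mem_univ, true_and, hkey]
                omega
              have hdecomp : Finset.univ.filter (fun x => key x ≤ key b)
                  = Finset.univ.filter (fun x => key x = key b)
                    ∪ Finset.univ.filter (fun x => key x ≤ key b - 1) := by
                ext x
                simp only [Finset.mem_union, Finset.mem_filter, Finset.mem_univ, true_and]
                constructor
                · intro hx
                  omega
                · intro hx
                  -- need key x ≥ something? key b - 1 could wrap; key b ≥ 1 since b itself
                  have hb1 : 1 ≤ key b := by
                    have : b ∈ Finset.univ.filter (fun o' => r o' b) := by simp [hrefl b]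
                    have := Finset.card_pos.mpr ⟨b, this⟩
                    exact this
                  omega
              have hdisj3 : Disjoint (Finset.univ.filter (fun x => key x = key b))
                  (Finset.univ.filter (fun x => key x ≤ key b - 1)) := by
                rw [Finset.disjoint_left]
                intro x hx hx'
                simp only [Finset.mem_filter, Finset.mem_univ, true_and] at hx hx'
                have hb1 : 1 ≤ key b := by
                  have : b ∈ Finset.univ.filter (fun o' => r o' b) := by simp [hrefl b]
                  exact Finset.card_pos.mpr ⟨b, this⟩
                omega
              rw [hsplit2, hdecomp, Finset.card_union_of_disjoint hdisj3]
              have hb1 : 1 ≤ key b := by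
                have : b ∈ Finset.univ.filter (fun o' => r o' b) := by simp [hrefl b]
                exact Finset.card_pos.mpr ⟨b, this⟩
              have hrec := ih (key b - 1) (by omega)
              have hcls : n ∣ (Finset.univ.filter (fun x => key x = key b)).card := by
                rw [← hclass]
                exact hdvd b
              exact Nat.dvd_add hcls hrec
        rw [hK, hfilter_eq o]
        exact general (key o)
      obtain ⟨q, hq⟩ := hdvdK
      -- compute each agent's count
      have hcount : ∀ i : Fin n,
          ((Finset.univ.filter (fun o => rank o % n = (i : ℕ))).filter
            (fun o' => r o' o)).card = q := by
        intro i
        have hset : (Finset.univ.filter (fun o => rank o % n = (i : ℕ))).filter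
            (fun o' => r o' o)
            = Finset.univ.filter (fun o' => rank o' < K ∧ rank o' % n = (i : ℕ)) := by
          ext x
          simp only [Finset.mem_filter, Finset.mem_univ, true_and]
          rw [← hprefix o x]
          tauto
        rw [hset]
        have hcard : (Finset.univ.filter (fun o' => rank o' < K ∧ rank o' % n = (i : ℕ))).card
            = ((Finset.univ.filter (fun o' => rank o' < K ∧ rank o' % n = (i : ℕ))).image
                rank).card :=
          (Finset.card_image_of_injective _ hrankinj).symm
        rw [hcard]
        have : (Finset.univ.filter (fun o' => rank o' < K ∧ rank o' % n = (i : ℕ))).image rank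
            = (Finset.range m).filter (fun t => t < K ∧ t % n = (i : ℕ)) := by
          rw [← himage, Finset.filter_image]
        rw [this]
        have hKm : K ≤ m := by
          rw [hK]
          calc (Finset.univ.filter (fun o' => r o' o)).card
              ≤ Finset.univ.card := Finset.card_le_card (Finset.filter_subset _ _)
            _ = m := Finset.card_univ
        have : (Finset.range m).filter (fun t => t < K ∧ t % n = (i : ℕ))
            = (Finset.range (n * q)).filter (fun t => t % n = (i : ℕ)) := by
          ext t
          simp only [Finset.mem_filter, Finset.mem_range]
          omega
        rw [this]
        exact count_mod_range n q (i : ℕ) i.isLt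
      rw [hcount i, hcount j]
end

section
/- For n agents with strict preferences over m objects, if m ≥ n + 1 then a weak SD proportional discrete assignment always exists. -/
/-!
Hall's theorem gives the first `n - 1` agents pairwise distinct objects, each among that agent's
top `n - 1` objects, so each of them holds an object of rank below `n`. The last agent receives
the remaining `m - n + 1 ≥ 2` objects; the second best of them has rank at most `(n - 1) + 2`,
which is below `2n` as soon as `n ≥ 2`. For `n = 1` the single agent simply gets everything.
-/

open Finset

namespace WeakSDProportional

theorem exists_mem_forall_rel {O : Type*} [DecidableEq O] {R : O → O → Prop}
    (htot : ∀ a b, R a b ∨ R b a)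
    (htrans : ∀ a b c, R a b → R b c → R a c) {S : Finset O} (hS : S.Nonempty) :
    ∃ b ∈ S, ∀ a ∈ S, R b a := by
  induction S using Finset.induction_on with
  | empty => simp at hS
  | insert a S _ ih =>
    have hrefl : R a a := (htot a a).elim id id
    obtain rfl | hne := S.eq_empty_or_nonempty
    · exact ⟨a, mem_singleton_self a, by simpa using hrefl⟩
    obtain ⟨b, hb, hbest⟩ := ih hne
    rcases htot a b with hab | hba
    · exact ⟨a, mem_insert_self a S,
        forall_mem_insert _ _ _ |>.2 ⟨hrefl, fun c hc => htrans _ _ _ hab (hbest c hc)⟩⟩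
    · exact ⟨b, mem_insert_of_mem hb, forall_mem_insert _ _ _ |>.2 ⟨hba, hbest⟩⟩

variable {O : Type*} [Fintype O] [DecidableEq O] (R : O → O → Prop) [DecidableRel R]

/-- `R a b` reads "`a` is weakly preferred to `b`", so this is the
1-based position of `o` in the ranking. -/
def rank (o : O) : ℕ := #(univ.filter (R · o))

variable {R}

theorem rank_le_card_compl_add_one (hanti : ∀ a b, R a b → R b a → a = b) {S : Finset O}
    {b : O} (hb : ∀ a ∈ S, R b a) : rank R b ≤ #Sᶜ + 1 := by
  have hsub : univ.filter (R · b) ⊆ Sᶜ ∪ {b} := by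
    intro x hx
    by_cases hxS : x ∈ S
    · exact mem_union_right _ (mem_singleton.2 (hanti x b (mem_filter.1 hx).2 (hb x hxS)))
    · exact mem_union_left _ (mem_compl.2 hxS)
  exact (card_le_card hsub).trans (card_union_le _ _)

theorem exists_card_eq_forall_rank_le (htot : ∀ a b, R a b ∨ R b a)
    (htrans : ∀ a b c, R a b → R b c → R a c) (hanti : ∀ a b, R a b → R b a → a = b)
    {k : ℕ} (hk : k ≤ Fintype.card O) :
    ∃ T : Finset O, #T = k ∧ ∀ o ∈ T, rank R o ≤ k := by
  induction k with
  | zero => exact ⟨∅, rfl, by simp⟩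
  | succ k ih =>
    obtain ⟨T, hTcard, hTrank⟩ := ih (by omega)
    have hne : Tᶜ.Nonempty := by
      rw [← card_pos, card_compl]
      omega
    obtain ⟨b, hbT, hbest⟩ := exists_mem_forall_rel htot htrans hne
    have hb : rank R b ≤ k + 1 := by
      simpa [hTcard] using rank_le_card_compl_add_one hanti hbest
    refine ⟨insert b T, by rw [card_insert_of_notMem (mem_compl.1 hbT), hTcard], ?_⟩
    exact forall_mem_insert _ _ _ |>.2 ⟨hb, fun o ho => (hTrank o ho).trans k.le_succ⟩

theorem exists_injective_rank_le {ι : Type*} [Fintype ι] {pref : ι → O → O → Prop}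
    [∀ i, DecidableRel (pref i)] (htot : ∀ i a b, pref i a b ∨ pref i b a)
    (htrans : ∀ i a b c, pref i a b → pref i b c → pref i a c)
    (hanti : ∀ i a b, pref i a b → pref i b a → a = b) {k : ℕ} (hι : Fintype.card ι ≤ k)
    (hk : k ≤ Fintype.card O) :
    ∃ f : ι → O, Function.Injective f ∧ ∀ i, rank (pref i) (f i) ≤ k := by
  choose T hTcard hTrank using fun i =>
    exists_card_eq_forall_rank_le (htot i) (htrans i) (hanti i) hk
  suffices hall : ∀ s : Finset ι, #s ≤ #(s.biUnion T) by
    obtain ⟨f, hf, hfT⟩ := (all_card_le_biUnion_card_iff_exists_injective T).1 hall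
    exact ⟨f, hf, fun i => hTrank i (f i) (hfT i)⟩
  intro s
  obtain rfl | ⟨i, hi⟩ := s.eq_empty_or_nonempty
  · simp
  calc #s ≤ Fintype.card ι := card_le_univ s
    _ ≤ #(T i) := hι.trans (hTcard i).ge
    _ ≤ #(s.biUnion T) := card_le_card (subset_biUnion_of_mem T hi)

/-- The witness is the second-best object of `S`. -/
theorem exists_rank_le_and_two_le_card_filter (htot : ∀ a b, R a b ∨ R b a)
    (htrans : ∀ a b c, R a b → R b c → R a c) (hanti : ∀ a b, R a b → R b a → a = b)
    {S : Finset O} (hS : 2 ≤ #S) :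
    ∃ o, rank R o ≤ #Sᶜ + 2 ∧ 2 ≤ #(S.filter (R · o)) := by
  obtain ⟨b, hbS, hbest⟩ := exists_mem_forall_rel htot htrans (S := S) (card_pos.1 (by omega))
  have hne : (S.erase b).Nonempty := by
    rw [← card_pos, card_erase_of_mem hbS]
    omega
  obtain ⟨c, hcS, hcbest⟩ := exists_mem_forall_rel htot htrans hne
  have hcb : c ≠ b := ne_of_mem_erase hcS
  refine ⟨c, ?_, ?_⟩
  · have := rank_le_card_compl_add_one hanti hcbest
    rw [compl_erase, card_insert_of_notMem (by simpa using hbS)] at this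
    omega
  · have hsub : {b, c} ⊆ S.filter (R · c) := by
      refine insert_subset (mem_filter.2 ⟨hbS, hbest c (mem_of_mem_erase hcS)⟩) ?_
      exact singleton_subset_iff.2 (mem_filter.2 ⟨mem_of_mem_erase hcS, (htot c c).elim id id⟩)
    calc 2 = #{b, c} := (card_pair hcb.symm).symm
      _ ≤ _ := card_le_card hsub

def singletonsThenRest {k : ℕ} (f : Fin k → O) : Fin (k + 1) → Finset O :=
  Fin.snoc (fun j => {f j}) (univ.image f)ᶜ

theorem existsUnique_mem_singletonsThenRest {k : ℕ} {f : Fin k → O}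
    (hf : Function.Injective f) (o : O) : ∃! i, o ∈ singletonsThenRest f i := by
  by_cases ho : ∃ j, f j = o
  · obtain ⟨j, rfl⟩ := ho
    refine ⟨j.castSucc, by simp [singletonsThenRest], fun i hi => ?_⟩
    induction i using Fin.lastCases with
    | last => simp [singletonsThenRest] at hi
    | cast j' => simpa [singletonsThenRest, hf.eq_iff, eq_comm] using hi
  · refine ⟨Fin.last k, by simpa [singletonsThenRest] using ho, fun i hi => ?_⟩
    induction i using Fin.lastCases with
    | last => rfl
    | cast j => exact absurd ⟨j, by simpa [singletonsThenRest, eq_comm] using hi⟩ ho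

end WeakSDProportional

open WeakSDProportional

/-- for strict preferences, if m ≥ n + 1 then a weak SD
proportional discrete assignment exists. -/
theorem stmt_9 {O : Type} [Fintype O] [DecidableEq O] {n : ℕ} (hn : 0 < n)
    (hm : n + 1 ≤ Fintype.card O)
    (r : Fin n → O → O → Prop) [∀ i, DecidableRel (r i)]
    (htot : ∀ i (a b : O), r i a b ∨ r i b a)
    (htrans : ∀ i (a b c : O), r i a b → r i b c → r i a c)
    (hanti : ∀ i (a b : O), r i a b → r i b a → a = b) :
    ∃ p : Fin n → Finset O, (∀ o : O, ∃! i, o ∈ p i) ∧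
      ∀ i, (∃ o : O, (Finset.univ.filter (fun o' => r i o' o)).card <
              ((p i).filter (fun o' => r i o' o)).card * n)
         ∨ (∀ o : O, (Finset.univ.filter (fun o' => r i o' o)).card ≤
              ((p i).filter (fun o' => r i o' o)).card * n) := by
  rcases n with _ | _ | k
  · exact absurd hn (lt_irrefl 0)
  · exact ⟨fun _ => univ, fun o => ⟨0, mem_univ o, fun i _ => Fin.fin_one_eq_zero i⟩,
      fun i => Or.inr fun o => by simp⟩
  obtain ⟨f, hf, hfrank⟩ := exists_injective_rank_le (pref := fun j : Fin (k + 1) => r j.castSucc)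
    (fun _ => htot _) (fun _ => htrans _) (fun _ => hanti _) (by simp) (k := k + 1) (by omega)
  refine ⟨singletonsThenRest f, existsUnique_mem_singletonsThenRest hf, fun i => Or.inl ?_⟩
  induction i using Fin.lastCases with
  | last =>
    have hcard : #(univ.image f) = k + 1 := by simp [card_image_of_injective _ hf]
    obtain ⟨o, hrank, htwo⟩ := exists_rank_le_and_two_le_card_filter (htot _) (htrans _)
      (hanti _) (S := (univ.image f)ᶜ) (by rw [card_compl]; omega)
    refine ⟨o, ?_⟩
    simp only [singletonsThenRest, Fin.snoc_last, compl_compl, hcard] at hrank htwo ⊢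
    calc rank _ o ≤ k + 1 + 2 := hrank
      _ < 2 * (k + 1 + 1) := by omega
      _ ≤ _ := Nat.mul_le_mul_right _ htwo
  | cast j =>
    refine ⟨f j, ?_⟩
    have hrefl := (htot j.castSucc (f j) (f j)).elim id id
    simp only [singletonsThenRest, Fin.snoc_castSucc, filter_singleton, hrefl, if_true,
      card_singleton, one_mul]
    exact lt_of_le_of_lt (hfrank j) (by omega)
end

section
/- If an agent with n = 3 total agents receives only the single best of his 4 top-tier objects plus one object from his second tier (of 2 objects), this can violate weak SD proportionality: for 3 agents with identical two-tier preferences (top class of 4 objects, bottom class of 2 objects) over 6 objects, no weak SD proportional discrete assignment exists. -/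
open Finset

lemma sum_card_eq {p : Fin 3 → Finset (Fin 6)} (h : ∀ o : Fin 6, ∃! i, o ∈ p i)
    (P : Fin 6 → Prop) [DecidablePred P] :
    ∑ i : Fin 3, ((p i).filter (fun o => P o)).card = (univ.filter (fun o : Fin 6 => P o)).card := by
  have : ∀ i : Fin 3, ((p i).filter (fun o => P o)).card
      = ∑ o : Fin 6, (if o ∈ p i ∧ P o then 1 else 0) := by
    intro i
    rw [Finset.card_eq_sum_ones, ← Finset.sum_filter]
    congr 1
    ext o
    simp [Finset.mem_filter, and_comm]
  simp only [this]
  rw [Finset.sum_comm]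
  rw [Finset.card_eq_sum_ones, Finset.sum_filter]
  apply Finset.sum_congr rfl
  intro o _
  obtain ⟨i, hi, huniq⟩ := h o
  by_cases hP : P o
  · simp only [hP, and_true, if_true]
    rw [← Finset.sum_filter]
    have : (univ.filter (fun j : Fin 3 => o ∈ p j)) = {i} := by
      ext j; simp only [mem_filter, mem_univ, true_and, mem_singleton]
      constructor
      · exact fun hj => huniq j hj
      · rintro rfl; exact hi
    simp [this]
  · simp [hP]

/-- for 3 agents with identical two-tier preferences over 6
objects (top class of 4 objects, bottom class of 2 objects), no weak SD
proportional discrete assignment exists. -/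
theorem stmt_10 :
    ¬ ∃ p : Fin 3 → Finset (Fin 6),
      (∀ o : Fin 6, ∃! i, o ∈ p i) ∧
      ∀ i : Fin 3,
        ((4 < ((p i).filter (fun o => o.val < 4)).card * 3 ∨ 6 < (p i).card * 3)
        ∨ (4 ≤ ((p i).filter (fun o => o.val < 4)).card * 3 ∧ 6 ≤ (p i).card * 3)) := by
  rintro ⟨p, hpart, hcond⟩
  have ht : ∑ i : Fin 3, ((p i).filter (fun o => o.val < 4)).card = 4 := by
    rw [sum_card_eq hpart]; decide
  have hc : ∑ i : Fin 3, (p i).card = 6 := by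
    have := sum_card_eq hpart (fun _ : Fin 6 => True)
    simpa using this
  have hle : ∀ i : Fin 3, ((p i).filter (fun o => o.val < 4)).card ≤ (p i).card :=
    fun i => Finset.card_filter_le _ _
  have h0 := hcond 0; have h1 := hcond 1; have h2 := hcond 2
  have hle0 := hle 0; have hle1 := hle 1; have hle2 := hle 2
  rw [Fin.sum_univ_three] at ht hc
  omega
end

section
/- For two agents, weak SD envy-freeness implies weak SD proportionality: if a discrete assignment p (partitioning O into p(1), p(2)) is such that neither agent strictly SD prefers the other's allocation to his own, then for each agent the uniform allocation (half of each object) does not strictly SD dominate his allocation. -/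
/-- for two agents, weak SD envy-freeness implies weak SD
proportionality. -/
theorem stmt_12 {O : Type} [Fintype O] [DecidableEq O]
    (r : Fin 2 → O → O → Prop) [∀ i, DecidableRel (r i)]
    (htot : ∀ i (a b : O), r i a b ∨ r i b a)
    (htrans : ∀ i (a b c : O), r i a b → r i b c → r i a c)
    (p : Fin 2 → Finset O) (hpart : ∀ o : O, ∃! i, o ∈ p i)
    (hef : ∀ i j : Fin 2,
      ¬ ((∀ o : O, ((p i).filter (fun o' => r i o' o)).card ≤
              ((p j).filter (fun o' => r i o' o)).card)
        ∧ ∃ o : O, ((p i).filter (fun o' => r i o' o)).card <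
              ((p j).filter (fun o' => r i o' o)).card)) :
    ∀ i : Fin 2,
      ¬ ((∀ o : O, ((p i).filter (fun o' => r i o' o)).card * 2 ≤
              (Finset.univ.filter (fun o' => r i o' o)).card)
        ∧ ∃ o : O, ((p i).filter (fun o' => r i o' o)).card * 2 <
              (Finset.univ.filter (fun o' => r i o' o)).card) := by
  rintro i ⟨h1, o0, h2⟩
  set j : Fin 2 := if i = 0 then 1 else 0 with hj
  have hij : i ≠ j := by fin_cases i <;> simp [hj]
  have hcover : ∀ o : O, o ∈ p i ∨ o ∈ p j := by
    intro o
    obtain ⟨k, hk, _⟩ := hpart o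
    fin_cases i <;> fin_cases k <;> simp_all [hj]
  have hdisj : Disjoint (p i) (p j) := by
    rw [Finset.disjoint_left]
    intro o hoi hoj
    obtain ⟨k, hk, huniq⟩ := hpart o
    exact hij ((huniq i hoi).trans (huniq j hoj).symm)
  have hsum : ∀ o : O, (Finset.univ.filter (fun o' => r i o' o)).card =
      ((p i).filter (fun o' => r i o' o)).card +
        ((p j).filter (fun o' => r i o' o)).card := by
    intro o
    have huniv : p i ∪ p j = Finset.univ := by
      ext x; simpa using hcover x
    rw [← Finset.card_union_of_disjoint
        (Finset.disjoint_filter_filter hdisj), ← Finset.filter_union, huniv]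
  refine hef i j ⟨fun o => ?_, o0, ?_⟩
  · have := h1 o; rw [hsum o] at this; omega
  · have := h2; rw [hsum o0] at this; omega
end

section
/- A discrete assignment of a cloned assignment problem is Pareto optimal if and only if the original assignment is Pareto optimal: given assignment problem (N, O, ≿) and discrete assignment p, construct clones i_o for each agent i and each object o ∈ p(i), each clone inheriting i's preferences and receiving exactly object o; then p is Pareto optimal among discrete assignments of (N,O,≿) iff the cloned assignment is Pareto optimal in the cloned problem. -/
lemma exists_max' {O : Type} [DecidableEq O] (r : O → O → Prop)
    (htot : ∀ a b, r a b ∨ r b a) (htrans : ∀ a b c, r a b → r b c → r a c) :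
    ∀ S : Finset O, S.Nonempty → ∃ t ∈ S, ∀ s ∈ S, r t s := by
  intro S
  induction S using Finset.induction_on with
  | empty => rintro ⟨x, hx⟩; simp at hx
  | @insert a S hna ih =>
    intro _
    by_cases hS : S.Nonempty
    · obtain ⟨t, htS, hmax⟩ := ih hS
      rcases htot a t with h | h
      · refine ⟨a, Finset.mem_insert_self _ _, ?_⟩
        intro s hs
        rcases Finset.mem_insert.1 hs with rfl | hs
        · rcases htot s s with h' | h' <;> exact h'
        · exact htrans _ _ _ h (hmax s hs)
      · refine ⟨t, Finset.mem_insert_of_mem htS, ?_⟩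
        intro s hs
        rcases Finset.mem_insert.1 hs with rfl | hs
        · exact h
        · exact hmax s hs
    · refine ⟨a, Finset.mem_insert_self _ _, ?_⟩
      intro s hs
      rcases Finset.mem_insert.1 hs with rfl | hs
      · rcases htot s s with h' | h' <;> exact h'
      · exact absurd ⟨s, hs⟩ hS

lemma matching' {O : Type} [DecidableEq O] (r : O → O → Prop) [DecidableRel r]
    (htot : ∀ a b, r a b ∨ r b a) (htrans : ∀ a b c, r a b → r b c → r a c) :
    ∀ n, ∀ S T : Finset O, S.card = n → T.card = n →
    (∀ u, (S.filter (fun o' => r o' u)).card ≤ (T.filter (fun o' => r o' u)).card) →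
    ∃ f : O → O, (∀ s ∈ S, f s ∈ T) ∧ Set.InjOn f ↑S ∧
      (∀ t ∈ T, ∃ s ∈ S, f s = t) ∧ (∀ s ∈ S, r (f s) s) := by
  intro n
  induction n with
  | zero =>
    intro S T hS hT _
    rw [Finset.card_eq_zero] at hS hT
    subst hS; subst hT
    exact ⟨id, by simp, by simp, by simp, by simp⟩
  | succ n ih =>
    intro S T hS hT hdom
    have hSne : S.Nonempty := Finset.card_pos.1 (by omega)
    have hTne : T.Nonempty := Finset.card_pos.1 (by omega)
    obtain ⟨s1, hs1S, hs1max⟩ := exists_max' r htot htrans S hSne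
    obtain ⟨t1, ht1T, ht1max⟩ := exists_max' r htot htrans T hTne
    have hrefl : ∀ a : O, r a a := fun a => (htot a a).elim id id
    -- r t1 s1
    have hts : r t1 s1 := by
      have h1 : s1 ∈ S.filter (fun o' => r o' s1) := Finset.mem_filter.2 ⟨hs1S, hrefl s1⟩
      have h2 : (T.filter (fun o' => r o' s1)).Nonempty := by
        rw [← Finset.card_pos]
        exact lt_of_lt_of_le (Finset.card_pos.2 ⟨s1, h1⟩) (hdom s1)
      obtain ⟨t, ht⟩ := h2
      obtain ⟨htT, hts1⟩ := Finset.mem_filter.1 ht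
      exact htrans _ _ _ (ht1max t htT) hts1
    -- dominance on erased sets
    have hdom' : ∀ u, ((S.erase s1).filter (fun o' => r o' u)).card ≤
        ((T.erase t1).filter (fun o' => r o' u)).card := by
      intro u
      rw [Finset.filter_erase, Finset.filter_erase]
      by_cases ht1u : r t1 u
      · by_cases hs1u : r s1 u
        · have hm1 : s1 ∈ S.filter (fun o' => r o' u) := Finset.mem_filter.2 ⟨hs1S, hs1u⟩
          have hm2 : t1 ∈ T.filter (fun o' => r o' u) := Finset.mem_filter.2 ⟨ht1T, ht1u⟩
          rw [Finset.card_erase_of_mem hm1, Finset.card_erase_of_mem hm2]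
          exact Nat.sub_le_sub_right (hdom u) 1
        · have : S.filter (fun o' => r o' u) = ∅ := by
            rw [Finset.filter_eq_empty_iff]
            intro s hsS hsu
            exact hs1u (htrans _ _ _ (hs1max s hsS) hsu)
          simp [this]
      · have hT0 : T.filter (fun o' => r o' u) = ∅ := by
          rw [Finset.filter_eq_empty_iff]
          intro t htT htu
          exact ht1u (htrans _ _ _ (ht1max t htT) htu)
        have hS0 : S.filter (fun o' => r o' u) = ∅ := by
          rw [← Finset.card_eq_zero]
          have := hdom u
          rw [hT0] at this
          simpa using this
        simp [hS0, hT0]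
    obtain ⟨f, hmap, hinj, hsurj, hpref⟩ := ih (S.erase s1) (T.erase t1)
      (by simp [Finset.card_erase_of_mem hs1S, hS])
      (by simp [Finset.card_erase_of_mem ht1T, hT]) hdom'
    refine ⟨Function.update f s1 t1, ?_, ?_, ?_, ?_⟩
    · intro s hsS
      by_cases h : s = s1
      · subst h; simp [ht1T]
      · rw [Function.update_of_ne h]
        exact Finset.mem_of_mem_erase (hmap s (Finset.mem_erase.2 ⟨h, hsS⟩))
    · intro x hx y hy hxy
      simp only [Finset.coe_mem, Finset.mem_coe] at hx hy
      by_cases hxs : x = s1 <;> by_cases hys : y = s1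
      · rw [hxs, hys]
      · exfalso
        rw [hxs, Function.update_self, Function.update_of_ne hys] at hxy
        have := hmap y (Finset.mem_erase.2 ⟨hys, hy⟩)
        rw [← hxy] at this
        exact (Finset.mem_erase.1 this).1 rfl
      · exfalso
        rw [hys, Function.update_self, Function.update_of_ne hxs] at hxy
        have := hmap x (Finset.mem_erase.2 ⟨hxs, hx⟩)
        rw [hxy] at this
        exact (Finset.mem_erase.1 this).1 rfl
      · rw [Function.update_of_ne hxs, Function.update_of_ne hys] at hxy
        exact hinj (Finset.mem_coe.2 (Finset.mem_erase.2 ⟨hxs, hx⟩))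
          (Finset.mem_coe.2 (Finset.mem_erase.2 ⟨hys, hy⟩)) hxy
    · intro t htTm
      by_cases h : t = t1
      · exact ⟨s1, hs1S, by simp [h]⟩
      · obtain ⟨s, hsS, hfs⟩ := hsurj t (Finset.mem_erase.2 ⟨h, htTm⟩)
        refine ⟨s, Finset.mem_of_mem_erase hsS, ?_⟩
        rw [Function.update_of_ne (Finset.mem_erase.1 hsS).1, hfs]
    · intro s hsS
      by_cases h : s = s1
      · subst h; simpa using hts
      · rw [Function.update_of_ne h]
        exact hpref s (Finset.mem_erase.2 ⟨h, hsS⟩)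

lemma partition_sum_card {A O : Type} [Fintype A] [Fintype O] [DecidableEq O] [DecidableEq A]
    (x : A → Finset O) (hx : ∀ o : O, ∃! i, o ∈ x i) :
    ∑ i, (x i).card = Fintype.card O := by
  classical
  let f : O → A := fun o => (hx o).exists.choose
  have hf : ∀ o, o ∈ x (f o) := fun o => (hx o).exists.choose_spec
  have hmem : ∀ o i, o ∈ x i ↔ f o = i := by
    intro o i
    constructor
    · intro h
      exact ((hx o).unique (hf o) h).symm ▸ rfl
    · rintro rfl; exact hf o
  have hx_eq : ∀ i, x i = Finset.univ.filter (fun o => f o = i) := by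
    intro i
    ext o
    simp [hmem o i]
  calc ∑ i, (x i).card = ∑ i, (Finset.univ.filter (fun o => f o = i)).card := by
        simp_rw [hx_eq]
    _ = (Finset.univ : Finset O).card :=
        (Finset.card_eq_sum_card_fiberwise (fun o _ => Finset.mem_univ (f o))).symm
    _ = Fintype.card O := Finset.card_univ

/-- a discrete assignment p is Pareto optimal (w.r.t. SD
domination) iff its cloned assignment (one clone per allocated object, each
clone receiving exactly that object) is Pareto optimal in the cloned problem. -/
theorem stmt_18 {A O : Type} [Fintype A] [Fintype O] [DecidableEq O] [DecidableEq A]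
    (r : A → O → O → Prop) [∀ i, DecidableRel (r i)]
    (htot : ∀ i (a b : O), r i a b ∨ r i b a)
    (htrans : ∀ i (a b c : O), r i a b → r i b c → r i a c)
    (p : A → Finset O) (hpart : ∀ o : O, ∃! i, o ∈ p i) :
    (¬ ∃ q : A → Finset O, (∀ o : O, ∃! i, o ∈ q i) ∧
        (∀ i (o : O), ((p i).filter (fun o' => r i o' o)).card ≤
            ((q i).filter (fun o' => r i o' o)).card) ∧
        (∃ i, ∃ o : O, ((p i).filter (fun o' => r i o' o)).card <
            ((q i).filter (fun o' => r i o' o)).card))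
    ↔ (¬ ∃ σ : {x : A × O // x.2 ∈ p x.1} → O, Function.Bijective σ ∧
        (∀ c : {x : A × O // x.2 ∈ p x.1}, r c.1.1 (σ c) c.1.2) ∧
        (∃ c : {x : A × O // x.2 ∈ p x.1}, ¬ r c.1.1 c.1.2 (σ c))) := by
  classical
  have hrefl : ∀ i (a : O), r i a a := fun i a => (htot i a a).elim id id
  constructor
  · -- ¬∃q → ¬∃σ : contrapose, from σ build q
    intro hq hσex
    obtain ⟨σ, ⟨hinj, hsurj⟩, hweak, ⟨c0, hc0⟩⟩ := hσex
    apply hq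
    set q : A → Finset O := fun i => (p i).attach.image (fun o => σ ⟨(i, o.1), o.2⟩) with hq_def
    have hqmem : ∀ i t, t ∈ q i ↔ ∃ (s : O) (hs : s ∈ p i), σ ⟨(i, s), hs⟩ = t := by
      intro i t
      simp only [hq_def, Finset.mem_image, Finset.mem_attach, true_and, Subtype.exists]
    -- helper g for each agent
    set g : A → O → O := fun i s => if h : s ∈ p i then σ ⟨(i, s), h⟩ else s with hg_def
    have hg_eq : ∀ i s (h : s ∈ p i), g i s = σ ⟨(i, s), h⟩ := by
      intro i s h; simp [hg_def, h]
    refine ⟨q, ?_, ?_, ?_⟩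
    · -- partition
      intro t
      obtain ⟨c, hc⟩ := hsurj t
      refine ⟨c.1.1, (hqmem c.1.1 t).2 ⟨c.1.2, c.2, hc⟩, ?_⟩
      · intro j hj
        rw [hqmem] at hj
        obtain ⟨s, hs, hss⟩ := hj
        have : (⟨(j, s), hs⟩ : {x : A × O // x.2 ∈ p x.1}) = c := hinj (by rw [hss, hc])
        have := congrArg (fun x => x.1.1) this
        simpa using this
    · -- weak dominance
      intro i u
      apply Finset.card_le_card_of_injOn (g i)
      · intro s hs
        obtain ⟨hsp, hsu⟩ := Finset.mem_filter.1 hs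
        rw [hg_eq i s hsp]
        refine Finset.mem_filter.2 ⟨(hqmem i _).2 ⟨s, hsp, rfl⟩, ?_⟩
        exact htrans i _ _ _ (hweak ⟨(i, s), hsp⟩) hsu
      · intro x hx y hy hxy
        simp only [Finset.mem_coe, Finset.mem_filter] at hx hy
        rw [hg_eq i x hx.1, hg_eq i y hy.1] at hxy
        have := hinj hxy
        have := congrArg (fun z => z.1.2) this
        simpa using this
    · -- strict
      obtain ⟨⟨i, o⟩, ho⟩ := c0
      rename' hc0 => hno
      simp only at hno
      refine ⟨i, σ ⟨(i, o), ho⟩, ?_⟩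
      set u := σ ⟨(i, o), ho⟩ with hu_def
      have himage : ((p i).filter (fun o' => r i o' u)).image (g i) ⊆
          (q i).filter (fun o' => r i o' u) := by
        intro t ht
        obtain ⟨s, hs, hst⟩ := Finset.mem_image.1 ht
        obtain ⟨hsp, hsu⟩ := Finset.mem_filter.1 hs
        rw [hg_eq i s hsp] at hst
        refine Finset.mem_filter.2 ⟨(hqmem i _).2 ⟨s, hsp, hst⟩, ?_⟩
        rw [← hst]
        exact htrans i _ _ _ (hweak ⟨(i, s), hsp⟩) hsu
      have huq : u ∈ (q i).filter (fun o' => r i o' u) :=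
        Finset.mem_filter.2 ⟨(hqmem i _).2 ⟨o, ho, rfl⟩, hrefl i u⟩
      have hunotim : u ∉ ((p i).filter (fun o' => r i o' u)).image (g i) := by
        intro hmem
        obtain ⟨s, hs, hst⟩ := Finset.mem_image.1 hmem
        obtain ⟨hsp, hsu⟩ := Finset.mem_filter.1 hs
        rw [hg_eq i s hsp] at hst
        have : (⟨(i, s), hsp⟩ : {x : A × O // x.2 ∈ p x.1}) = ⟨(i, o), ho⟩ :=
          hinj (by rw [hst])
        have hso : s = o := by
          have := congrArg (fun z => z.1.2) this
          simpa using this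
        subst hso
        exact hno hsu
      have hcard_im : (((p i).filter (fun o' => r i o' u)).image (g i)).card =
          ((p i).filter (fun o' => r i o' u)).card := by
        apply Finset.card_image_of_injOn
        intro x hx y hy hxy
        simp only [Finset.mem_coe, Finset.mem_filter] at hx hy
        rw [hg_eq i x hx.1, hg_eq i y hy.1] at hxy
        have := hinj hxy
        have := congrArg (fun z => z.1.2) this
        simpa using this
      rw [← hcard_im]
      exact Finset.card_lt_card (Finset.ssubset_iff_of_subset himage |>.2 ⟨u, huq, hunotim⟩)
  · -- ¬∃σ → ¬∃q : from q build σ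
    intro hσ hqex
    obtain ⟨q, hqpart, hdom, ⟨i0, u0, hstrict⟩⟩ := hqex
    apply hσ
    -- card equality
    have hle : ∀ i, (p i).card ≤ (q i).card := by
      intro i
      rcases Finset.eq_empty_or_nonempty (p i) with h | h
      · simp [h]
      · obtain ⟨m, hmp, hmin⟩ := exists_max' (fun a b => r i b a)
          (fun a b => htot i b a) (fun a b c hab hbc => htrans i c b a hbc hab) (p i) h
        have hfp : (p i).filter (fun o' => r i o' m) = p i :=
          Finset.filter_true_of_mem (fun s hs => hmin s hs)
        calc (p i).card = ((p i).filter (fun o' => r i o' m)).card := by rw [hfp]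
          _ ≤ ((q i).filter (fun o' => r i o' m)).card := hdom i m
          _ ≤ (q i).card := Finset.card_le_card (Finset.filter_subset _ _)
    have hsum : ∑ i, (p i).card = ∑ i, (q i).card := by
      rw [partition_sum_card p hpart, partition_sum_card q hqpart]
    have hcard : ∀ i, (p i).card = (q i).card := by
      intro i
      have := (Finset.sum_eq_sum_iff_of_le (fun i _ => hle i)).1 hsum
      exact this i (Finset.mem_univ i)
    -- matchings
    have hm : ∀ i, ∃ f : O → O, (∀ s ∈ p i, f s ∈ q i) ∧ Set.InjOn f ↑(p i) ∧
        (∀ t ∈ q i, ∃ s ∈ p i, f s = t) ∧ (∀ s ∈ p i, r i (f s) s) :=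
      fun i => matching' (r i) (htot i) (htrans i) ((p i).card) (p i) (q i) rfl
        (hcard i).symm (fun u => hdom i u)
    set F : A → O → O := fun i => (hm i).choose with hF_def
    have hFmap : ∀ i, ∀ s ∈ p i, F i s ∈ q i := fun i => (hm i).choose_spec.1
    have hFinj : ∀ i, Set.InjOn (F i) ↑(p i) := fun i => (hm i).choose_spec.2.1
    have hFsurj : ∀ i, ∀ t ∈ q i, ∃ s ∈ p i, F i s = t := fun i => (hm i).choose_spec.2.2.1
    have hFpref : ∀ i, ∀ s ∈ p i, r i (F i s) s := fun i => (hm i).choose_spec.2.2.2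
    refine ⟨fun c => F c.1.1 c.1.2, ⟨?_, ?_⟩, ?_, ?_⟩
    · rintro ⟨⟨i, o⟩, ho⟩ ⟨⟨j, o'⟩, ho'⟩ h
      simp only at h
      have hij : i = j := by
        have h1 : F i o ∈ q i := hFmap i o ho
        have h2 : F j o' ∈ q j := hFmap j o' ho'
        rw [h] at h1
        exact ((hqpart (F j o')).unique h1 h2)
      subst hij
      have : o = o' := hFinj i (Finset.mem_coe.2 ho) (Finset.mem_coe.2 ho') h
      subst this
      rfl
    · intro t
      obtain ⟨j, hjt, _⟩ := hqpart t
      obtain ⟨s, hs, hst⟩ := hFsurj j t hjt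
      exact ⟨⟨(j, s), hs⟩, hst⟩
    · rintro ⟨⟨i, o⟩, ho⟩
      exact hFpref i o ho
    · -- strict clone
      by_contra hall
      push_neg at hall
      have hall' : ∀ s ∈ p i0, r i0 s (F i0 s) := by
        intro s hs
        exact hall ⟨(i0, s), hs⟩
      have hsub : (q i0).filter (fun o' => r i0 o' u0) ⊆
          ((p i0).filter (fun o' => r i0 o' u0)).image (F i0) := by
        intro t ht
        obtain ⟨htq, htu⟩ := Finset.mem_filter.1 ht
        obtain ⟨s, hs, hst⟩ := hFsurj i0 t htq
        refine Finset.mem_image.2 ⟨s, ?_, hst⟩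
        refine Finset.mem_filter.2 ⟨hs, ?_⟩
        have : r i0 s t := hst ▸ hall' s hs
        exact htrans i0 _ _ _ this htu
      have := Finset.card_le_card hsub
      have him := Finset.card_image_le (s := (p i0).filter (fun o' => r i0 o' u0)) (f := F i0)
      omega
end
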